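/- Consider the random walk on {0,…,L} started at s0, with i.i.d. steps equal to +1 with probability p and −1 with probability 1−p, absorbed upon first reaching 0 or L at the (almost surely finite) absorption time T. Fix terminal rewards λ_0, λ_L ∈ ℝ and let G = λ_{X_T} − T be the episodic return. Then for every g ∈ ℝ, P(G = g) equals the sum, over those s ∈ {0, L} for which t := λ_s − g is an integer with t ≥ 1 and s − s0 + t even, of (1−p)^{t−r} p^{r} · a_{s0,L}(t,r), where r = (s − s0 + t)/2 and a_{s0,L}(t,r) = Σ_{k∈ℤ} [C(t−1, r′+kL) − C(t−1, r′+s0+kL)] with r′ = r if s = 0 and r′ = r−1 if s = L. -/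

import Mathlib

open MeasureTheory ProbabilityTheory
open scoped Classical

/-- Binomial coefficient `C(n,k)` with integer lower index `k`, equal to `0`
unless `0 ≤ k ≤ n`. -/
def Cb (n : ℕ) (k : ℤ) : ℤ := if 0 ≤ k ∧ k ≤ (n : ℤ) then (n.choose k.toNat : ℤ) else 0

lemma Cb_pascal (n : ℕ) (k : ℤ) : Cb (n+1) k = Cb n (k-1) + Cb n k := by
  unfold Cb
  split_ifs with h1 h2 h3 h2 h3
  · have hk : k.toNat = (k-1).toNat + 1 := by omega
    rw [hk, Nat.choose_succ_succ]
    push_cast; ring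
  · have h5 : k.toNat = n + 1 := by omega
    have h4 : (k-1).toNat = n := by omega
    rw [h5, h4, Nat.choose_self, Nat.choose_self]; ring
  · have h5 : k.toNat = 0 := by omega
    rw [h5, Nat.choose_zero_right, Nat.choose_zero_right]; ring
  · omega
  · omega
  · omega
  · omega
  · ring

lemma Cb_symm (n : ℕ) (k : ℤ) : Cb n k = Cb n (n - k) := by
  unfold Cb
  rcases le_or_gt 0 k with h | h
  · rcases le_or_gt k n with h2 | h2
    · rw [if_pos ⟨h, h2⟩, if_pos (by omega)]
      have h3 : (↑n - k).toNat = n - k.toNat := by omega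
      rw [h3, Nat.choose_symm (by omega)]
    · rw [if_neg (by omega), if_neg (by omega)]
  · rw [if_neg (by omega), if_neg (by omega)]

/-- Number of ±1-paths of length `n` with total displacement `d`. -/
def D (n : ℕ) (d : ℤ) : ℤ := if (2:ℤ) ∣ ((n:ℤ) + d) then Cb n (((n:ℤ) + d)/2) else 0

lemma D_zero (d : ℤ) : D 0 d = if d = 0 then 1 else 0 := by
  rcases eq_or_ne d 0 with h | h
  · subst h; simp [D, Cb]
  · rw [if_neg h]
    unfold D Cb
    split_ifs with h1 h2
    · exfalso; push_cast at h2; omega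
    · rfl
    · rfl

lemma D_succ (n : ℕ) (d : ℤ) : D (n+1) d = D n (d-1) + D n (d+1) := by
  unfold D
  push_cast
  by_cases h : (2:ℤ) ∣ ((n:ℤ) + 1 + d)
  · rw [if_pos h, if_pos (by omega), if_pos (by omega)]
    have e1 : ((n:ℤ) + (d-1))/2 = ((n:ℤ) + 1 + d)/2 - 1 := by omega
    have e2 : ((n:ℤ) + (d+1))/2 = ((n:ℤ) + 1 + d)/2 := by omega
    rw [e1, e2, Cb_pascal]
  · rw [if_neg h, if_neg (by omega), if_neg (by omega)]
    ring

lemma D_symm (n : ℕ) (d : ℤ) : D n d = D n (-d) := by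
  unfold D
  by_cases h : (2:ℤ) ∣ ((n:ℤ) + d)
  · rw [if_pos h, if_pos (by omega), Cb_symm]
    congr 1; omega
  · rw [if_neg h, if_neg (by omega)]

lemma D_eq_zero (n : ℕ) (d : ℤ) (h : (n:ℤ) < |d|) : D n d = 0 := by
  rcases le_or_gt 0 d with hd | hd
  · rw [abs_of_nonneg hd] at h
    unfold D Cb
    by_cases h2 : (2:ℤ) ∣ ((n:ℤ) + d)
    · obtain ⟨c, hc⟩ := h2
      rw [if_pos ⟨c, hc⟩, if_neg (by omega)]
    · rw [if_neg h2]
  · rw [abs_of_neg hd] at h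
    unfold D Cb
    by_cases h2 : (2:ℤ) ∣ ((n:ℤ) + d)
    · obtain ⟨c, hc⟩ := h2
      rw [if_pos ⟨c, hc⟩, if_neg (by omega)]
    · rw [if_neg h2]

lemma D_nonneg (n : ℕ) (d : ℤ) : 0 ≤ D n d := by
  unfold D Cb
  by_cases h2 : (2:ℤ) ∣ ((n:ℤ) + d)
  · rw [if_pos h2]; positivity
  · rw [if_neg h2]

lemma D_shift_vanish {L : ℕ} (hL : 0 < L) (n : ℕ) (c : ℤ) (k : ℤ)
    (hk : k ∉ Finset.Icc (-(n:ℤ) - |c| - 2) ((n:ℤ) + |c| + 2)) :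
    D n (c - 2*k*(L:ℤ)) = 0 := by
  simp only [Finset.mem_Icc, not_and_or, not_le] at hk
  apply D_eq_zero
  have hL1 : (1:ℤ) ≤ (L:ℤ) := by exact_mod_cast hL
  have h1 : |2*k*(L:ℤ)| = 2 * |k| * (L:ℤ) := by
    rw [abs_mul, abs_mul, abs_of_nonneg (show (0:ℤ) ≤ (L:ℤ) by positivity)]
    norm_num
  have hc0 : (0:ℤ) ≤ |c| := abs_nonneg c
  have hk0 : (0:ℤ) ≤ |k| := abs_nonneg k
  have h2 : (n:ℤ) + |c| + 2 ≤ |k| := by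
    rcases le_or_gt 0 k with h | h
    · rw [abs_of_nonneg h]; omega
    · rw [abs_of_neg h]; omega
  have h3 : |c - 2*k*(L:ℤ)| = |2*k*(L:ℤ) - c| := abs_sub_comm _ _
  have h4 : |2*k*(L:ℤ)| - |c| ≤ |2*k*(L:ℤ) - c| := abs_sub_abs_le_abs_sub _ _
  nlinarith [mul_nonneg hk0 (show (0:ℤ) ≤ (L:ℤ) - 1 by omega)]

lemma summable_D_shift {L : ℕ} (hL : 0 < L) (n : ℕ) (c : ℤ) :
    Summable (fun k : ℤ => (D n (c - 2*k*(L:ℤ)) : ℝ)) := by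
  apply summable_of_ne_finset_zero (s := Finset.Icc (-(n:ℤ) - |c| - 2) ((n:ℤ) + |c| + 2))
  intro k hk
  rw [D_shift_vanish hL n c k hk]
  norm_num

/-- Method-of-images signed path count. -/
noncomputable def FF (L : ℕ) (s0 : ℤ) (n : ℕ) (x : ℤ) : ℝ :=
  ∑' k : ℤ, ((D n (x - s0 - 2*k*L) : ℝ) - (D n (x + s0 - 2*k*L) : ℝ))

lemma FF_succ {L : ℕ} (hL : 0 < L) (s0 : ℤ) (n : ℕ) (x : ℤ) :
    FF L s0 (n+1) x = FF L s0 n (x-1) + FF L s0 n (x+1) := by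
  unfold FF
  have e : ∀ k : ℤ, ((D (n+1) (x - s0 - 2*k*L) : ℝ) - (D (n+1) (x + s0 - 2*k*L) : ℝ))
      = ((D n ((x-1) - s0 - 2*k*L) : ℝ) - (D n ((x-1) + s0 - 2*k*L) : ℝ))
        + ((D n ((x+1) - s0 - 2*k*L) : ℝ) - (D n ((x+1) + s0 - 2*k*L) : ℝ)) := by
    intro k
    have e1 : D (n+1) (x - s0 - 2*k*L) = D n (x - s0 - 2*k*L - 1) + D n (x - s0 - 2*k*L + 1) :=
      D_succ n _
    have e2 : D (n+1) (x + s0 - 2*k*L) = D n (x + s0 - 2*k*L - 1) + D n (x + s0 - 2*k*L + 1) :=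
      D_succ n _
    rw [e1, e2]
    push_cast
    have c1 : (x-1) - s0 - 2*k*L = x - s0 - 2*k*L - 1 := by ring
    have c2 : (x+1) - s0 - 2*k*L = x - s0 - 2*k*L + 1 := by ring
    have c3 : (x-1) + s0 - 2*k*L = x + s0 - 2*k*L - 1 := by ring
    have c4 : (x+1) + s0 - 2*k*L = x + s0 - 2*k*L + 1 := by ring
    rw [c1, c2, c3, c4]
    ring
  rw [tsum_congr e]
  exact Summable.tsum_add
    ((summable_D_shift hL n ((x-1) - s0)).sub (summable_D_shift hL n ((x-1) + s0)))
    ((summable_D_shift hL n ((x+1) - s0)).sub (summable_D_shift hL n ((x+1) + s0)))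

lemma FF_zero {L : ℕ} (hL : 0 < L) (s0 : ℤ) (n : ℕ) : FF L s0 n 0 = 0 := by
  unfold FF
  have e : ∀ k : ℤ, ((D n (0 - s0 - 2*k*L) : ℝ) - (D n (0 + s0 - 2*k*L) : ℝ))
      = (D n (s0 - 2*(-k)*L) : ℝ) - (D n (s0 - 2*k*L) : ℝ) := by
    intro k
    have : D n (0 - s0 - 2*k*L) = D n (s0 - 2*(-k)*L) := by
      rw [D_symm]; congr 1; ring
    rw [this]
    norm_num
  rw [tsum_congr e]
  have h1 : Summable (fun k : ℤ => (D n (s0 - 2*(-k)*(L:ℤ)) : ℝ)) :=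
    (summable_D_shift hL n s0).comp_injective neg_injective
  rw [Summable.tsum_sub h1 (summable_D_shift hL n s0), sub_eq_zero]
  exact (Equiv.neg ℤ).tsum_eq (fun k => (D n (s0 - 2*k*L) : ℝ))

lemma FF_L {L : ℕ} (hL : 0 < L) (s0 : ℤ) (n : ℕ) : FF L s0 n L = 0 := by
  unfold FF
  have e : ∀ k : ℤ, (((D n ((L:ℤ) - s0 - 2*k*L)) : ℝ) - ((D n ((L:ℤ) + s0 - 2*k*L)) : ℝ))
      = (D n ((L:ℤ) - s0 - 2*k*L) : ℝ) - (D n ((L:ℤ) - s0 - 2*((1:ℤ)-k)*L) : ℝ) := by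
    intro k
    have : D n ((L:ℤ) + s0 - 2*k*L) = D n ((L:ℤ) - s0 - 2*((1:ℤ)-k)*L) := by
      rw [D_symm]; congr 1; ring
    rw [this]
  rw [tsum_congr e]
  have h1 : Summable (fun k : ℤ => (D n ((L:ℤ) - s0 - 2*((1:ℤ)-k)*(L:ℤ)) : ℝ)) :=
    (summable_D_shift hL n ((L:ℤ) - s0)).comp_injective (Equiv.subLeft (1:ℤ)).injective
  rw [Summable.tsum_sub (summable_D_shift hL n ((L:ℤ) - s0)) h1, sub_eq_zero]
  exact ((Equiv.subLeft (1:ℤ)).tsum_eq (fun k => (D n ((L:ℤ) - s0 - 2*k*L) : ℝ))).symm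

lemma FF_base {L : ℕ} (s0 : ℤ) (hs0 : 0 < s0) (hs0L : s0 < (L:ℤ)) (x : ℤ)
    (hx0 : 0 < x) (hxL : x < (L:ℤ)) :
    FF L s0 0 x = if x = s0 then 1 else 0 := by
  unfold FF
  rw [tsum_eq_single 0]
  · simp only [D_zero]
    have h2 : ¬ (x + s0 - 2*0*(L:ℤ) = 0) := by omega
    rw [if_neg h2]
    by_cases h : x = s0
    · rw [if_pos (by omega), if_pos h]; norm_num
    · rw [if_neg (by omega), if_neg h]; norm_num
  · intro k hk
    have hL2 : (2:ℤ) ≤ 2*(L:ℤ) := by omega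
    simp only [D_zero]
    rw [if_neg (by rcases lt_or_gt_of_ne hk with h | h <;> nlinarith),
      if_neg (by rcases lt_or_gt_of_ne hk with h | h <;> nlinarith)]
    norm_num

/-- Count of ±1-paths from `s0` staying strictly inside `(0, L)` up to time `n`,
ending at `x`. -/
def Mc (L : ℕ) (s0 : ℤ) : ℕ → ℤ → ℤ
  | 0, x => if x = s0 ∧ 0 < x ∧ x < (L:ℤ) then 1 else 0
  | (n+1), x => if 0 < x ∧ x < (L:ℤ) then Mc L s0 n (x-1) + Mc L s0 n (x+1) else 0

lemma Mc_nonneg (L : ℕ) (s0 : ℤ) : ∀ n x, 0 ≤ Mc L s0 n x := by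
  intro n
  induction n with
  | zero => intro x; unfold Mc; split_ifs <;> norm_num
  | succ n ih =>
    intro x; unfold Mc; split_ifs
    · exact add_nonneg (ih _) (ih _)
    · exact le_refl 0

lemma Mc_boundary (L : ℕ) (s0 : ℤ) (n : ℕ) (x : ℤ) (h : ¬ (0 < x ∧ x < (L:ℤ))) :
    Mc L s0 n x = 0 := by
  cases n with
  | zero => unfold Mc; rw [if_neg (by tauto)]
  | succ n => unfold Mc; rw [if_neg h]

lemma Mc_parity (L : ℕ) (s0 : ℤ) : ∀ (n : ℕ) (x : ℤ), ¬ ((2:ℤ) ∣ (x - s0 + (n:ℤ))) → Mc L s0 n x = 0 := by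
  intro n
  induction n with
  | zero =>
    intro x h; unfold Mc
    rw [if_neg (by push_cast at h; intro hc; exact h (by omega))]
  | succ n ih =>
    intro x h; unfold Mc
    split_ifs with h1
    · rw [ih (x-1) (by push_cast at h ⊢; omega), ih (x+1) (by push_cast at h ⊢; omega)]
      ring
    · rfl

lemma Mc_eq_FF {L : ℕ} {s0 : ℤ} (hL : 0 < L) (hs0 : 0 < s0) (hs0L : s0 < (L:ℤ)) :
    ∀ n x, 0 < x → x < (L:ℤ) → (Mc L s0 n x : ℝ) = FF L s0 n x := by
  intro n
  induction n with
  | zero =>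
    intro x hx0 hxL
    rw [FF_base s0 hs0 hs0L x hx0 hxL]
    unfold Mc
    split_ifs with h1 h2 h2
    · norm_num
    · exact absurd h1.1 h2
    · exact absurd ⟨h2, hx0, hxL⟩ h1
    · norm_num
  | succ n ih =>
    intro x hx0 hxL
    rw [FF_succ hL s0 n x]
    unfold Mc
    rw [if_pos ⟨hx0, hxL⟩]
    push_cast
    have e1 : (Mc L s0 n (x-1) : ℝ) = FF L s0 n (x-1) := by
      rcases eq_or_lt_of_le (show (0:ℤ) ≤ x - 1 by omega) with h | h
      · rw [Mc_boundary L s0 n (x-1) (by omega), ← h, FF_zero hL]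
        norm_num
      · exact ih (x-1) h (by omega)
    have e2 : (Mc L s0 n (x+1) : ℝ) = FF L s0 n (x+1) := by
      rcases eq_or_lt_of_le (show x + 1 ≤ (L:ℤ) by omega) with h | h
      · rw [Mc_boundary L s0 n (x+1) (by omega), h, FF_L hL]
        norm_num
      · exact ih (x+1) (by omega) h
    rw [e1, e2]

lemma measure_eq_of_eq_off_null {Ω : Type*} [MeasurableSpace Ω] (P : Measure Ω)
    (A B N : Set Ω) (hN : P N = 0) (h : A ∩ Nᶜ = B ∩ Nᶜ) : P A = P B := by
  have key : ∀ C D : Set Ω, C ∩ Nᶜ = D ∩ Nᶜ → P C ≤ P D := by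
    intro C D hCD
    calc P C ≤ P ((C ∩ Nᶜ) ∪ N) := by
          apply measure_mono
          intro x hx
          by_cases hxN : x ∈ N
          · exact Or.inr hxN
          · exact Or.inl ⟨hx, hxN⟩
      _ ≤ P (C ∩ Nᶜ) + P N := measure_union_le _ _
      _ = P (D ∩ Nᶜ) := by rw [hN, hCD]; simp
      _ ≤ P D := measure_mono Set.inter_subset_left
  exact le_antisymm (key A B h) (key B A h.symm)

lemma indep_cylinder {Ω : Type*} [MeasurableSpace Ω] {P : Measure Ω}
    {ξ : ℕ → Ω → ℤ} (hmeas : ∀ i, Measurable (ξ i))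
    (hindep : iIndepFun ξ P) (n : ℕ) (S : Set (Fin n → ℤ)) (c : ℤ) :
    P ((fun ω (i : Fin n) => ξ (i : ℕ) ω) ⁻¹' S ∩ (ξ n) ⁻¹' {c})
      = P ((fun ω (i : Fin n) => ξ (i : ℕ) ω) ⁻¹' S) * P ((ξ n) ⁻¹' {c}) := by
  classical
  have hdisj : Disjoint (Finset.range n) ({n} : Finset ℕ) := by
    simp [Finset.disjoint_singleton_right]
  have h1 := hindep.indepFun_finset (Finset.range n) {n} hdisj hmeas
  let g1 : ((i : ↥(Finset.range n)) → ℤ) → (Fin n → ℤ) :=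
    fun v i => v ⟨(i : ℕ), by simp [Finset.mem_range, i.isLt]⟩
  have hg1 : Measurable g1 := measurable_pi_lambda _ (fun i => measurable_pi_apply _)
  let g2 : ((i : ↥({n} : Finset ℕ)) → ℤ) → ℤ := fun v => v ⟨n, by simp⟩
  have hg2 : Measurable g2 := measurable_pi_apply _
  have h2 : IndepFun (fun ω (i : Fin n) => ξ (i : ℕ) ω) (ξ n) P := h1.comp hg1 hg2
  exact (indepFun_iff_measure_inter_preimage_eq_mul.mp h2) S {c}
    (S.to_countable.measurableSet) (measurableSet_singleton c)

/-- Paths strictly inside `(0,L)` up to time `n`, at `x` at time `n`. -/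
def QEset {Ω : Type*} (L : ℕ) (X : ℕ → Ω → ℤ) (n : ℕ) (x : ℤ) : Set Ω :=
  {ω | (∀ k ≤ n, 0 < X k ω ∧ X k ω < (L:ℤ)) ∧ X n ω = x}

/-- Paths avoiding the boundary before time `t` and at `b` at time `t`. -/
def Aset {Ω : Type*} (L : ℕ) (X : ℕ → Ω → ℤ) (b : ℤ) (t : ℕ) : Set Ω :=
  {ω | (∀ k < t, X k ω ≠ 0 ∧ X k ω ≠ (L:ℤ)) ∧ X t ω = b}

/-- The event that all of the first `m` steps are ±1. -/
def Gset {Ω : Type*} (ξ : ℕ → Ω → ℤ) (m : ℕ) : Set Ω :=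
  {ω | ∀ i < m, ξ i ω = 1 ∨ ξ i ω = -1}

section RW

variable {Ω : Type*} [MeasurableSpace Ω] {P : Measure Ω} [IsProbabilityMeasure P]
  {L : ℕ} {s0 : ℤ} {p : ℝ} {ξ : ℕ → Ω → ℤ} {X : ℕ → Ω → ℤ}

lemma meas_X (hmeas : ∀ i, Measurable (ξ i))
    (hX : ∀ k ω, X k ω = s0 + ∑ i ∈ Finset.range k, ξ i ω) (k : ℕ) : Measurable (X k) := by
  have : X k = fun ω => s0 + ∑ i ∈ Finset.range k, ξ i ω := funext fun ω => hX k ω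
  rw [this]
  exact measurable_const.add (Finset.measurable_sum _ fun i _ => hmeas i)

lemma X_succ (hX : ∀ k ω, X k ω = s0 + ∑ i ∈ Finset.range k, ξ i ω) (n : ℕ) (ω : Ω) :
    X (n+1) ω = X n ω + ξ n ω := by
  rw [hX, hX, Finset.sum_range_succ]; ring

lemma X_zero (hX : ∀ k ω, X k ω = s0 + ∑ i ∈ Finset.range k, ξ i ω) (ω : Ω) : X 0 ω = s0 := by
  rw [hX]; simp

lemma Gset_null (hp0 : 0 < p) (hp1 : p < 1) (hmeas : ∀ i, Measurable (ξ i))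
    (hplus : ∀ i, P {ω | ξ i ω = 1} = ENNReal.ofReal p)
    (hminus : ∀ i, P {ω | ξ i ω = -1} = ENNReal.ofReal (1 - p)) (m : ℕ) :
    P (Gset ξ m)ᶜ = 0 := by
  have h1 : ∀ i : ℕ, P ({ω | ξ i ω = 1 ∨ ξ i ω = -1})ᶜ = 0 := by
    intro i
    have hs : {ω | ξ i ω = 1 ∨ ξ i ω = -1} = {ω | ξ i ω = 1} ∪ {ω | ξ i ω = -1} := rfl
    have hm1 : MeasurableSet {ω | ξ i ω = 1} := (hmeas i) (measurableSet_singleton 1)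
    have hm2 : MeasurableSet {ω | ξ i ω = -1} := (hmeas i) (measurableSet_singleton (-1))
    have hd : Disjoint {ω | ξ i ω = 1} {ω | ξ i ω = -1} := by
      rw [Set.disjoint_left]
      intro ω ha hb
      simp only [Set.mem_setOf_eq] at ha hb
      omega
    have hP : P {ω | ξ i ω = 1 ∨ ξ i ω = -1} = 1 := by
      rw [hs, measure_union hd hm2, hplus i, hminus i,
        ← ENNReal.ofReal_add (by linarith) (by linarith)]
      norm_num
    rw [hs, measure_compl (hm1.union hm2) (measure_ne_top P _), measure_univ, ← hs, hP,
      tsub_self]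
  have h2 : (Gset ξ m)ᶜ ⊆ ⋃ i ∈ Finset.range m, ({ω | ξ i ω = 1 ∨ ξ i ω = -1})ᶜ := by
    intro ω hω
    simp only [Gset, Set.mem_compl_iff, Set.mem_setOf_eq, not_forall] at hω
    obtain ⟨i, hi, hne⟩ := hω
    simp only [Set.mem_iUnion, Set.mem_compl_iff, Set.mem_setOf_eq]
    exact ⟨i, Finset.mem_range.mpr hi, hne⟩
  refine measure_mono_null h2 ?_
  apply measure_biUnion_null_iff (Finset.range m).countable_toSet |>.mpr
  intro i _
  exact h1 i

lemma QEset_meas (hmeas : ∀ i, Measurable (ξ i))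
    (hX : ∀ k ω, X k ω = s0 + ∑ i ∈ Finset.range k, ξ i ω) (n : ℕ) (x : ℤ) :
    MeasurableSet (QEset L X n x) := by
  have he : QEset L X n x
      = (⋂ k ∈ Set.Iic n, (X k) ⁻¹' (Set.Ioo 0 (L:ℤ))) ∩ (X n) ⁻¹' {x} := by
    ext ω
    simp [QEset, Set.mem_Ioo, and_comm]
  rw [he]
  exact (MeasurableSet.biInter (Set.to_countable _)
    (fun k _ => meas_X hmeas hX k measurableSet_Ioo)).inter
    (meas_X hmeas hX n (measurableSet_singleton x))

lemma Aset_meas (hmeas : ∀ i, Measurable (ξ i))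
    (hX : ∀ k ω, X k ω = s0 + ∑ i ∈ Finset.range k, ξ i ω) (b : ℤ) (t : ℕ) :
    MeasurableSet (Aset L X b t) := by
  have he : Aset L X b t
      = (⋂ k ∈ Set.Iio t, ((X k) ⁻¹' {0})ᶜ ∩ ((X k) ⁻¹' {(L:ℤ)})ᶜ) ∩ (X t) ⁻¹' {b} := by
    ext ω
    simp [Aset]
  rw [he]
  exact (MeasurableSet.biInter (Set.to_countable _)
    (fun k _ => ((meas_X hmeas hX k (measurableSet_singleton 0)).compl).inter
      ((meas_X hmeas hX k (measurableSet_singleton (L:ℤ))).compl))).inter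
    (meas_X hmeas hX t (measurableSet_singleton b))

lemma QEset_preimage (hX : ∀ k ω, X k ω = s0 + ∑ i ∈ Finset.range k, ξ i ω) (n : ℕ) (x : ℤ) :
    ∃ S : Set (Fin n → ℤ), QEset L X n x = (fun ω (i : Fin n) => ξ (i:ℕ) ω) ⁻¹' S := by
  classical
  set w : (Fin n → ℤ) → ℕ → ℤ :=
    fun v k => s0 + ∑ i : Fin n, if (i:ℕ) < k then v i else 0 with hw
  refine ⟨{v | (∀ k ≤ n, 0 < w v k ∧ w v k < (L:ℤ)) ∧ w v n = x}, ?_⟩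
  have hkey : ∀ (ω : Ω) (k : ℕ), k ≤ n → w (fun i : Fin n => ξ (i:ℕ) ω) k = X k ω := by
    intro ω k hk
    rw [hw, hX]
    beta_reduce
    congr 1
    rw [Fin.sum_univ_eq_sum_range (fun i => if i < k then ξ i ω else 0) n,
      ← Finset.sum_filter]
    congr 1
    ext i
    simp only [Finset.mem_filter, Finset.mem_range]
    omega
  ext ω
  simp only [QEset, Set.mem_setOf_eq, Set.mem_preimage]
  constructor
  · rintro ⟨h1, h2⟩
    exact ⟨fun k hk => by rw [hkey ω k hk]; exact h1 k hk, by rw [hkey ω n le_rfl]; exact h2⟩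
  · rintro ⟨h1, h2⟩
    refine ⟨fun k hk => ?_, ?_⟩
    · have := h1 k hk; rwa [hkey ω k hk] at this
    · have := h2; rwa [hkey ω n le_rfl] at this

end RW

section RW2

variable {Ω : Type*} [MeasurableSpace Ω] {P : Measure Ω} [IsProbabilityMeasure P]
  {L : ℕ} {s0 : ℤ} {p : ℝ} {ξ : ℕ → Ω → ℤ} {X : ℕ → Ω → ℤ}

lemma Q_rec (hp0 : 0 < p) (hp1 : p < 1) (hmeas : ∀ i, Measurable (ξ i))
    (hindep : iIndepFun ξ P)
    (hplus : ∀ i, P {ω | ξ i ω = 1} = ENNReal.ofReal p)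
    (hminus : ∀ i, P {ω | ξ i ω = -1} = ENNReal.ofReal (1 - p))
    (hX : ∀ k ω, X k ω = s0 + ∑ i ∈ Finset.range k, ξ i ω)
    (n : ℕ) (x : ℤ) (hx0 : 0 < x) (hxL : x < (L:ℤ)) :
    P (QEset L X (n+1) x)
      = P (QEset L X n (x-1)) * ENNReal.ofReal p
        + P (QEset L X n (x+1)) * ENNReal.ofReal (1-p) := by
  classical
  obtain ⟨S1, hS1⟩ := QEset_preimage (L := L) hX n (x-1)
  obtain ⟨S2, hS2⟩ := QEset_preimage (L := L) hX n (x+1)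
  have hB1 : P (QEset L X n (x-1) ∩ (ξ n) ⁻¹' {1})
      = P (QEset L X n (x-1)) * P ((ξ n) ⁻¹' {1}) := by
    rw [hS1]; exact indep_cylinder hmeas hindep n S1 1
  have hB2 : P (QEset L X n (x+1) ∩ (ξ n) ⁻¹' {-1})
      = P (QEset L X n (x+1)) * P ((ξ n) ⁻¹' {-1}) := by
    rw [hS2]; exact indep_cylinder hmeas hindep n S2 (-1)
  have hunion : P (QEset L X (n+1) x)
      = P ((QEset L X n (x-1) ∩ (ξ n) ⁻¹' {1}) ∪ (QEset L X n (x+1) ∩ (ξ n) ⁻¹' {-1})) := by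
    apply measure_eq_of_eq_off_null P _ _ ((Gset ξ (n+1))ᶜ)
      (Gset_null hp0 hp1 hmeas hplus hminus (n+1))
    rw [compl_compl]
    ext ω
    simp only [Set.mem_inter_iff, Set.mem_union, Set.mem_preimage, Set.mem_singleton_iff,
      QEset, Gset, Set.mem_setOf_eq]
    constructor
    · rintro ⟨⟨hint, hxn⟩, hG⟩
      have hstep := X_succ hX n ω
      rcases hG n (by omega) with h | h
      · refine ⟨Or.inl ⟨⟨fun k hk => hint k (by omega), by omega⟩, h⟩, hG⟩
      · refine ⟨Or.inr ⟨⟨fun k hk => hint k (by omega), by omega⟩, h⟩, hG⟩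
    · rintro ⟨hmem, hG⟩
      have hstep := X_succ hX n ω
      refine ⟨⟨?_, ?_⟩, hG⟩
      · intro k hk
        rcases Nat.lt_or_ge k (n+1) with h | h
        · rcases hmem with ⟨⟨h1, _⟩, _⟩ | ⟨⟨h1, _⟩, _⟩ <;> exact h1 k (by omega)
        · have hk1 : k = n + 1 := by omega
          subst hk1
          rcases hmem with ⟨⟨_, h2⟩, h3⟩ | ⟨⟨_, h2⟩, h3⟩ <;> constructor <;> omega
      · rcases hmem with ⟨⟨_, h2⟩, h3⟩ | ⟨⟨_, h2⟩, h3⟩ <;> omega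
  rw [hunion, measure_union ?_ ?_, hB1, hB2]
  · have e1 : (ξ n) ⁻¹' {1} = {ω | ξ n ω = 1} := rfl
    have e2 : (ξ n) ⁻¹' {-1} = {ω | ξ n ω = -1} := rfl
    rw [e1, e2, hplus n, hminus n]
  · rw [Set.disjoint_left]
    rintro ω ⟨_, h1⟩ ⟨_, h2⟩
    simp only [Set.mem_preimage, Set.mem_singleton_iff] at h1 h2
    omega
  · exact (QEset_meas hmeas hX n (x+1)).inter (hmeas n (measurableSet_singleton (-1)))

lemma Q_base (hs0 : 0 < s0) (hs0L : s0 < (L:ℤ))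
    (hX : ∀ k ω, X k ω = s0 + ∑ i ∈ Finset.range k, ξ i ω) (x : ℤ) :
    P (QEset L X 0 x) = if x = s0 then 1 else 0 := by
  by_cases h : x = s0
  · subst h
    have : QEset L X 0 x = Set.univ := by
      ext ω
      simp only [QEset, Set.mem_setOf_eq, Set.mem_univ, iff_true]
      have h0 := X_zero hX ω
      exact ⟨fun k hk => by rcases Nat.le_zero.mp hk; omega, h0⟩
    rw [this, if_pos rfl, measure_univ]
  · have : QEset L X 0 x = ∅ := by
      ext ω
      simp only [QEset, Set.mem_setOf_eq, Set.mem_empty_iff_false, iff_false, not_and]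
      intro _
      rw [X_zero hX ω]
      omega
    rw [this, if_neg h, measure_empty]

lemma Q_empty (x : ℤ) (hx : ¬ (0 < x ∧ x < (L:ℤ))) (n : ℕ) : P (QEset L X n x) = 0 := by
  have : QEset L X n x = ∅ := by
    ext ω
    simp only [QEset, Set.mem_setOf_eq, Set.mem_empty_iff_false, iff_false, not_and]
    intro h1 h2
    exact hx (h2 ▸ h1 n le_rfl)
  rw [this, measure_empty]

lemma Q_eq_M (hp0 : 0 < p) (hp1 : p < 1) (hs0 : 0 < s0) (hs0L : s0 < (L:ℤ))
    (hmeas : ∀ i, Measurable (ξ i))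
    (hindep : iIndepFun ξ P)
    (hplus : ∀ i, P {ω | ξ i ω = 1} = ENNReal.ofReal p)
    (hminus : ∀ i, P {ω | ξ i ω = -1} = ENNReal.ofReal (1 - p))
    (hX : ∀ k ω, X k ω = s0 + ∑ i ∈ Finset.range k, ξ i ω) :
    ∀ (n : ℕ) (x u v : ℤ), u + v = (n:ℤ) → u - v = x - s0 →
    P (QEset L X n x) = ENNReal.ofReal (p ^ u * (1-p) ^ v * (Mc L s0 n x : ℝ)) := by
  have hq : (0:ℝ) < 1 - p := by linarith
  intro n
  induction n with
  | zero =>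
    intro x u v huv hd
    rw [Q_base hs0 hs0L hX x]
    by_cases h : x = s0
    · have hMc1 : Mc L s0 0 x = 1 := by
        show (if x = s0 ∧ 0 < x ∧ x < (L:ℤ) then 1 else 0) = 1
        rw [if_pos ⟨h, by omega, by omega⟩]
      have hu : u = 0 := by omega
      have hv : v = 0 := by omega
      rw [if_pos h, hMc1, hu, hv]
      norm_num
    · have : Mc L s0 0 x = 0 := by
        unfold Mc; rw [if_neg (by tauto)]
      rw [if_neg h, this]
      norm_num
  | succ n ih =>
    intro x u v huv hd
    by_cases hx : 0 < x ∧ x < (L:ℤ)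
    · rw [Q_rec hp0 hp1 hmeas hindep hplus hminus hX n x hx.1 hx.2,
        ih (x-1) (u-1) v (by omega) (by omega), ih (x+1) u (v-1) (by omega) (by omega)]
      have hMc : Mc L s0 (n+1) x = Mc L s0 n (x-1) + Mc L s0 n (x+1) := by
        show (if 0 < x ∧ x < (L:ℤ) then Mc L s0 n (x-1) + Mc L s0 n (x+1) else 0) = _
        rw [if_pos hx]
      have hm1 : (0:ℝ) ≤ (Mc L s0 n (x-1) : ℝ) := by exact_mod_cast Mc_nonneg L s0 n (x-1)
      have hm2 : (0:ℝ) ≤ (Mc L s0 n (x+1) : ℝ) := by exact_mod_cast Mc_nonneg L s0 n (x+1)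
      rw [← ENNReal.ofReal_mul (by positivity), ← ENNReal.ofReal_mul (by positivity),
        ← ENNReal.ofReal_add (by positivity) (by positivity)]
      congr 1
      have hMcR : ((Mc L s0 (n+1) x : ℤ) : ℝ)
          = ((Mc L s0 n (x-1) : ℤ) : ℝ) + ((Mc L s0 n (x+1) : ℤ) : ℝ) := by
        exact_mod_cast congrArg (fun z : ℤ => (z : ℝ)) hMc
      rw [hMcR]
      have e1 : p ^ (u-1) * (1-p) ^ v * (Mc L s0 n (x-1) : ℝ) * p
          = p ^ u * (1-p) ^ v * (Mc L s0 n (x-1) : ℝ) := by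
        have : p ^ u = p ^ (u-1) * p := by
          rw [← zpow_add_one₀ (ne_of_gt hp0)]; congr 1; ring
        rw [this]; ring
      have e2 : p ^ u * (1-p) ^ (v-1) * (Mc L s0 n (x+1) : ℝ) * (1-p)
          = p ^ u * (1-p) ^ v * (Mc L s0 n (x+1) : ℝ) := by
        have : (1-p) ^ v = (1-p) ^ (v-1) * (1-p) := by
          rw [← zpow_add_one₀ (ne_of_gt hq)]; congr 1; ring
        rw [this]; ring
      rw [e1, e2]; ring
    · rw [Q_empty x hx (n+1), Mc_boundary L s0 (n+1) x hx]
      norm_num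

lemma Q_parity (hp0 : 0 < p) (hp1 : p < 1) (hs0 : 0 < s0) (hs0L : s0 < (L:ℤ))
    (hmeas : ∀ i, Measurable (ξ i))
    (hindep : iIndepFun ξ P)
    (hplus : ∀ i, P {ω | ξ i ω = 1} = ENNReal.ofReal p)
    (hminus : ∀ i, P {ω | ξ i ω = -1} = ENNReal.ofReal (1 - p))
    (hX : ∀ k ω, X k ω = s0 + ∑ i ∈ Finset.range k, ξ i ω) :
    ∀ (n : ℕ) (x : ℤ), ¬ ((2:ℤ) ∣ (x - s0 + (n:ℤ))) → P (QEset L X n x) = 0 := by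
  intro n
  induction n with
  | zero =>
    intro x h
    rw [Q_base hs0 hs0L hX x, if_neg ?_]
    intro he
    apply h
    rw [he]
    norm_num
  | succ n ih =>
    intro x h
    by_cases hx : 0 < x ∧ x < (L:ℤ)
    · rw [Q_rec hp0 hp1 hmeas hindep hplus hminus hX n x hx.1 hx.2,
        ih (x-1) (by push_cast at h ⊢; omega), ih (x+1) (by push_cast at h ⊢; omega)]
      simp
    · exact Q_empty x hx (n+1)

end RW2

section RW3

variable {Ω : Type*} [MeasurableSpace Ω] {P : Measure Ω} [IsProbabilityMeasure P]
  {L : ℕ} {s0 : ℤ} {p : ℝ} {ξ : ℕ → Ω → ℤ} {X : ℕ → Ω → ℤ}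

lemma interior_of_avoid (hs0 : 0 < s0) (hs0L : s0 < (L:ℤ))
    (hX : ∀ k ω, X k ω = s0 + ∑ i ∈ Finset.range k, ξ i ω)
    (t : ℕ) (ω : Ω) (hG : ω ∈ Gset ξ t)
    (hav : ∀ k < t, X k ω ≠ 0 ∧ X k ω ≠ (L:ℤ)) :
    ∀ k < t, 0 < X k ω ∧ X k ω < (L:ℤ) := by
  intro k
  induction k with
  | zero => intro _; rw [X_zero hX]; exact ⟨hs0, hs0L⟩
  | succ k ih =>
    intro hk
    have h1 := ih (by omega)
    have h2 := X_succ hX k ω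
    have h3 := hG k (by omega)
    have h4 := hav (k+1) hk
    rcases h3 with h3 | h3 <;> constructor <;> omega

lemma A_absorb0 (hp0 : 0 < p) (hp1 : p < 1) (hs0 : 0 < s0) (hs0L : s0 < (L:ℤ))
    (hmeas : ∀ i, Measurable (ξ i))
    (hindep : iIndepFun ξ P)
    (hplus : ∀ i, P {ω | ξ i ω = 1} = ENNReal.ofReal p)
    (hminus : ∀ i, P {ω | ξ i ω = -1} = ENNReal.ofReal (1 - p))
    (hX : ∀ k ω, X k ω = s0 + ∑ i ∈ Finset.range k, ξ i ω) (n : ℕ) :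
    P (Aset L X 0 (n+1)) = P (QEset L X n 1) * ENNReal.ofReal (1-p) := by
  obtain ⟨S, hS⟩ := QEset_preimage (L := L) hX n 1
  have hind : P (QEset L X n 1 ∩ (ξ n) ⁻¹' {-1})
      = P (QEset L X n 1) * P ((ξ n) ⁻¹' {-1}) := by
    rw [hS]; exact indep_cylinder hmeas hindep n S (-1)
  have hmain : P (Aset L X 0 (n+1)) = P (QEset L X n 1 ∩ (ξ n) ⁻¹' {-1}) := by
    apply measure_eq_of_eq_off_null P _ _ ((Gset ξ (n+1))ᶜ)
      (Gset_null hp0 hp1 hmeas hplus hminus (n+1))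
    rw [compl_compl]
    ext ω
    simp only [Set.mem_inter_iff, Set.mem_preimage, Set.mem_singleton_iff,
      Aset, QEset, Gset, Set.mem_setOf_eq]
    constructor
    · rintro ⟨⟨hav, hX0⟩, hG⟩
      have hint := interior_of_avoid hs0 hs0L hX (n+1) ω hG hav
      have hstep := X_succ hX n ω
      have hXn := hint n (by omega)
      have hξ := hG n (by omega)
      have hξm : ξ n ω = -1 := by rcases hξ with h | h <;> omega
      exact ⟨⟨⟨fun k hk => hint k (by omega), by omega⟩, hξm⟩, hG⟩
    · rintro ⟨⟨⟨hint, hXn⟩, hξ⟩, hG⟩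
      have hstep := X_succ hX n ω
      refine ⟨⟨fun k hk => ?_, by omega⟩, hG⟩
      rcases Nat.lt_or_ge k (n+1) with h | h
      · have := hint k (by omega); constructor <;> omega
      · have hk1 : k = n + 1 := by omega
        subst hk1
        constructor <;> omega
  rw [hmain, hind]
  congr 1
  exact hminus n

lemma A_absorbL (hp0 : 0 < p) (hp1 : p < 1) (hs0 : 0 < s0) (hs0L : s0 < (L:ℤ))
    (hmeas : ∀ i, Measurable (ξ i))
    (hindep : iIndepFun ξ P)
    (hplus : ∀ i, P {ω | ξ i ω = 1} = ENNReal.ofReal p)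
    (hminus : ∀ i, P {ω | ξ i ω = -1} = ENNReal.ofReal (1 - p))
    (hX : ∀ k ω, X k ω = s0 + ∑ i ∈ Finset.range k, ξ i ω) (n : ℕ) :
    P (Aset L X (L:ℤ) (n+1)) = P (QEset L X n ((L:ℤ)-1)) * ENNReal.ofReal p := by
  obtain ⟨S, hS⟩ := QEset_preimage (L := L) hX n ((L:ℤ)-1)
  have hind : P (QEset L X n ((L:ℤ)-1) ∩ (ξ n) ⁻¹' {1})
      = P (QEset L X n ((L:ℤ)-1)) * P ((ξ n) ⁻¹' {1}) := by
    rw [hS]; exact indep_cylinder hmeas hindep n S 1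
  have hmain : P (Aset L X (L:ℤ) (n+1)) = P (QEset L X n ((L:ℤ)-1) ∩ (ξ n) ⁻¹' {1}) := by
    apply measure_eq_of_eq_off_null P _ _ ((Gset ξ (n+1))ᶜ)
      (Gset_null hp0 hp1 hmeas hplus hminus (n+1))
    rw [compl_compl]
    ext ω
    simp only [Set.mem_inter_iff, Set.mem_preimage, Set.mem_singleton_iff,
      Aset, QEset, Gset, Set.mem_setOf_eq]
    constructor
    · rintro ⟨⟨hav, hX0⟩, hG⟩
      have hint := interior_of_avoid hs0 hs0L hX (n+1) ω hG hav
      have hstep := X_succ hX n ω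
      have hXn := hint n (by omega)
      have hξ := hG n (by omega)
      have hξm : ξ n ω = 1 := by rcases hξ with h | h <;> omega
      exact ⟨⟨⟨fun k hk => hint k (by omega), by omega⟩, hξm⟩, hG⟩
    · rintro ⟨⟨⟨hint, hXn⟩, hξ⟩, hG⟩
      have hstep := X_succ hX n ω
      refine ⟨⟨fun k hk => ?_, by omega⟩, hG⟩
      rcases Nat.lt_or_ge k (n+1) with h | h
      · have := hint k (by omega); constructor <;> omega
      · have hk1 : k = n + 1 := by omega
        subst hk1
        constructor <;> omega
  rw [hmain, hind]
  congr 1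
  exact hplus n

end RW3

/-- For the ±1 random walk on `{0,…,L}` started at `s0`, absorbed on
first reaching `0` or `L` at time `T`, with episodic return `G = λ_{X_T} - T`, the
probability `P(G = g)` is given by the method-of-images formula. -/
theorem stmt_0 {Ω : Type*} [MeasurableSpace Ω] (P : Measure Ω) [IsProbabilityMeasure P]
    (L : ℕ) (hL : 2 ≤ L) (s0 : ℤ) (hs0 : 0 < s0) (hs0L : s0 < (L : ℤ))
    (p : ℝ) (hp0 : 0 < p) (hp1 : p < 1)
    (lam0 lamL : ℝ)
    (ξ : ℕ → Ω → ℤ) (hmeas : ∀ i, Measurable (ξ i))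
    (hindep : iIndepFun ξ P)
    (hplus : ∀ i, P {ω | ξ i ω = 1} = ENNReal.ofReal p)
    (hminus : ∀ i, P {ω | ξ i ω = -1} = ENNReal.ofReal (1 - p))
    (X : ℕ → Ω → ℤ) (hX : ∀ k ω, X k ω = s0 + ∑ i ∈ Finset.range k, ξ i ω)
    (g : ℝ) :
    P {ω | ∃ t : ℕ, 0 < t ∧ (∀ k < t, X k ω ≠ 0 ∧ X k ω ≠ (L : ℤ)) ∧
        (X t ω = 0 ∨ X t ω = (L : ℤ)) ∧
        g = (if X t ω = 0 then lam0 else lamL) - t}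
      = ENNReal.ofReal (∑ s ∈ ({0, (L : ℤ)} : Finset ℤ), ∑' t : ℕ,
          if 1 ≤ t ∧ (if s = 0 then lam0 else lamL) - g = (t : ℝ) ∧ (2 : ℤ) ∣ (s - s0 + t) then
            (1 - p) ^ ((t : ℤ) - (s - s0 + t) / 2) * p ^ ((s - s0 + t) / 2) *
              ∑' k : ℤ,
                ((Cb (t - 1) ((if s = 0 then (s - s0 + t) / 2 else (s - s0 + t) / 2 - 1)
                    + k * L) : ℝ)
                - (Cb (t - 1) ((if s = 0 then (s - s0 + t) / 2 else (s - s0 + t) / 2 - 1)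
                    + s0 + k * L) : ℝ))
          else 0) := by
  
  classical
  have hLpos : 0 < L := by omega
  have hq0 : (0:ℝ) < 1 - p := by linarith
  -- the two branch functions
  set f0 : ℕ → ℝ := fun t =>
    if 1 ≤ t ∧ lam0 - g = (t:ℝ) ∧ (2:ℤ) ∣ (0 - s0 + (t:ℤ)) then
      (1 - p) ^ ((t : ℤ) - (0 - s0 + (t:ℤ)) / 2) * p ^ ((0 - s0 + (t:ℤ)) / 2) *
        ∑' k : ℤ, ((Cb (t - 1) ((0 - s0 + (t:ℤ)) / 2 + k * L) : ℝ)
          - (Cb (t - 1) ((0 - s0 + (t:ℤ)) / 2 + s0 + k * L) : ℝ))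
    else 0 with hf0def
  set fL : ℕ → ℝ := fun t =>
    if 1 ≤ t ∧ lamL - g = (t:ℝ) ∧ (2:ℤ) ∣ ((L:ℤ) - s0 + (t:ℤ)) then
      (1 - p) ^ ((t : ℤ) - ((L:ℤ) - s0 + (t:ℤ)) / 2) * p ^ (((L:ℤ) - s0 + (t:ℤ)) / 2) *
        ∑' k : ℤ, ((Cb (t - 1) (((L:ℤ) - s0 + (t:ℤ)) / 2 - 1 + k * L) : ℝ)
          - (Cb (t - 1) (((L:ℤ) - s0 + (t:ℤ)) / 2 - 1 + s0 + k * L) : ℝ))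
    else 0 with hfLdef
  -- RHS rewriting
  have hRHS : (∑ s ∈ ({0, (L : ℤ)} : Finset ℤ), ∑' t : ℕ,
          if 1 ≤ t ∧ (if s = 0 then lam0 else lamL) - g = (t : ℝ) ∧ (2 : ℤ) ∣ (s - s0 + t) then
            (1 - p) ^ ((t : ℤ) - (s - s0 + t) / 2) * p ^ ((s - s0 + t) / 2) *
              ∑' k : ℤ,
                ((Cb (t - 1) ((if s = 0 then (s - s0 + t) / 2 else (s - s0 + t) / 2 - 1)
                    + k * L) : ℝ)
                - (Cb (t - 1) ((if s = 0 then (s - s0 + t) / 2 else (s - s0 + t) / 2 - 1)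
                    + s0 + k * L) : ℝ))
          else 0)
      = (∑' t : ℕ, f0 t) + (∑' t : ℕ, fL t) := by
    rw [Finset.sum_pair (show (0:ℤ) ≠ (L:ℤ) by omega)]
    have h00 : (((0:ℤ)) = 0) = True := by simp
    have hLL : (((L:ℤ)) = 0) = False := by simp; omega
    simp only [h00, hLL, if_true, if_false, hf0def, hfLdef]
  -- tsum identities
  have htsum0 : ∀ (n : ℕ) (r : ℤ), (0 - s0 + (((n:ℤ))+1)) = 2*r →
      (∑' k : ℤ, ((Cb n (r + k * L) : ℝ) - (Cb n (r + s0 + k * L) : ℝ)))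
        = (Mc L s0 n 1 : ℝ) := by
    intro n r hr
    rw [Mc_eq_FF hLpos hs0 hs0L n 1 (by norm_num) (by omega)]
    unfold FF
    rw [← (Equiv.neg ℤ).tsum_eq
      (fun k : ℤ => ((D n (1 - s0 - 2*k*(L:ℤ)) : ℝ) - (D n (1 + s0 - 2*k*(L:ℤ)) : ℝ)))]
    apply tsum_congr
    intro k
    simp only [Equiv.neg_apply]
    have h1 : D n (1 - s0 - 2*(-k)*(L:ℤ)) = Cb n (r + k*(L:ℤ)) := by
      have hnum : (n:ℤ) + (1 - s0 - 2*(-k)*(L:ℤ)) = 2*(r + k*(L:ℤ)) := by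
        linear_combination hr
      unfold D
      rw [if_pos ⟨r + k*(L:ℤ), hnum⟩, hnum,
        Int.mul_ediv_cancel_left _ (by norm_num : (2:ℤ) ≠ 0)]
    have h2 : D n (1 + s0 - 2*(-k)*(L:ℤ)) = Cb n (r + s0 + k*(L:ℤ)) := by
      have hnum : (n:ℤ) + (1 + s0 - 2*(-k)*(L:ℤ)) = 2*(r + s0 + k*(L:ℤ)) := by
        linear_combination hr
      unfold D
      rw [if_pos ⟨r + s0 + k*(L:ℤ), hnum⟩, hnum,
        Int.mul_ediv_cancel_left _ (by norm_num : (2:ℤ) ≠ 0)]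
    rw [h1, h2]
  have htsumL : ∀ (n : ℕ) (r : ℤ), ((L:ℤ) - s0 + (((n:ℤ))+1)) = 2*r →
      (∑' k : ℤ, ((Cb n (r - 1 + k * L) : ℝ) - (Cb n (r - 1 + s0 + k * L) : ℝ)))
        = (Mc L s0 n ((L:ℤ)-1) : ℝ) := by
    intro n r hr
    rw [Mc_eq_FF hLpos hs0 hs0L n ((L:ℤ)-1) (by omega) (by omega)]
    unfold FF
    rw [← (Equiv.neg ℤ).tsum_eq
      (fun k : ℤ => ((D n ((L:ℤ)-1 - s0 - 2*k*(L:ℤ)) : ℝ) - (D n ((L:ℤ)-1 + s0 - 2*k*(L:ℤ)) : ℝ)))]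
    apply tsum_congr
    intro k
    simp only [Equiv.neg_apply]
    have h1 : D n ((L:ℤ)-1 - s0 - 2*(-k)*(L:ℤ)) = Cb n (r - 1 + k*(L:ℤ)) := by
      have hnum : (n:ℤ) + ((L:ℤ)-1 - s0 - 2*(-k)*(L:ℤ)) = 2*(r - 1 + k*(L:ℤ)) := by
        linear_combination hr
      unfold D
      rw [if_pos ⟨r - 1 + k*(L:ℤ), hnum⟩, hnum,
        Int.mul_ediv_cancel_left _ (by norm_num : (2:ℤ) ≠ 0)]
    have h2 : D n ((L:ℤ)-1 + s0 - 2*(-k)*(L:ℤ)) = Cb n (r - 1 + s0 + k*(L:ℤ)) := by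
      have hnum : (n:ℤ) + ((L:ℤ)-1 + s0 - 2*(-k)*(L:ℤ)) = 2*(r - 1 + s0 + k*(L:ℤ)) := by
        linear_combination hr
      unfold D
      rw [if_pos ⟨r - 1 + s0 + k*(L:ℤ), hnum⟩, hnum,
        Int.mul_ediv_cancel_left _ (by norm_num : (2:ℤ) ≠ 0)]
    rw [h1, h2]
  -- event decomposition
  set e : ℕ → Set Ω := fun t =>
    (if g = lam0 - (t:ℝ) then Aset L X 0 t else ∅)
      ∪ (if g = lamL - (t:ℝ) then Aset L X (L:ℤ) t else ∅) with hedef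
  have hmem_e : ∀ t ω, ω ∈ e t →
      (∀ k < t, X k ω ≠ 0 ∧ X k ω ≠ (L:ℤ)) ∧ (X t ω = 0 ∨ X t ω = (L:ℤ)) := by
    intro t ω hω
    rw [hedef] at hω
    rcases hω with h | h
    · split_ifs at h with hc
      · exact ⟨h.1, Or.inl h.2⟩
      · exact absurd h (Set.notMem_empty ω)
    · split_ifs at h with hc
      · exact ⟨h.1, Or.inr h.2⟩
      · exact absurd h (Set.notMem_empty ω)
  have hEeq : {ω | ∃ t : ℕ, 0 < t ∧ (∀ k < t, X k ω ≠ 0 ∧ X k ω ≠ (L : ℤ)) ∧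
      (X t ω = 0 ∨ X t ω = (L : ℤ)) ∧
      g = (if X t ω = 0 then lam0 else lamL) - t} = ⋃ t, e t := by
    ext ω
    simp only [Set.mem_setOf_eq, Set.mem_iUnion]
    constructor
    · rintro ⟨t, ht, hav, hb, hgc⟩
      refine ⟨t, ?_⟩
      rw [hedef]
      rcases hb with h0 | hLb
      · apply Set.mem_union_left
        rw [if_pos h0] at hgc
        rw [if_pos hgc]
        exact ⟨hav, h0⟩
      · apply Set.mem_union_right
        have hne : ¬ (X t ω = 0) := by rw [hLb]; omega
        rw [if_neg hne] at hgc
        rw [if_pos hgc]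
        exact ⟨hav, hLb⟩
    · rintro ⟨t, hω⟩
      have h2 := hmem_e t ω hω
      have hX0 := X_zero hX ω
      have ht0 : 0 < t := by
        rcases Nat.eq_zero_or_pos t with h | h
        · subst h; rcases h2.2 with hh | hh <;> omega
        · exact h
      refine ⟨t, ht0, h2.1, h2.2, ?_⟩
      rw [hedef] at hω
      rcases hω with h | h
      · split_ifs at h with hc
        · rw [if_pos h.2]; exact hc
        · exact absurd h (Set.notMem_empty ω)
      · split_ifs at h with hc
        · have hne : ¬ (X t ω = 0) := by have := h.2; omega
          rw [if_neg hne]; exact hc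
        · exact absurd h (Set.notMem_empty ω)
  have hmeas_e : ∀ t, MeasurableSet (e t) := by
    intro t
    rw [hedef]
    apply MeasurableSet.union <;> split_ifs
    · exact Aset_meas hmeas hX 0 t
    · exact MeasurableSet.empty
    · exact Aset_meas hmeas hX (L:ℤ) t
    · exact MeasurableSet.empty
  have hdisj : Pairwise (Function.onFun Disjoint e) := by
    intro t t' hne
    have key : ∀ a b : ℕ, a < b → ∀ ω, ω ∈ e a → ω ∈ e b → False := by
      intro a b hab ω h1 h2
      have m1 := hmem_e a ω h1
      have m2 := hmem_e b ω h2
      have := m2.1 a hab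
      rcases m1.2 with hh | hh <;> tauto
    rw [Function.onFun, Set.disjoint_left]
    intro ω h1 h2
    rcases Nat.lt_or_ge t t' with h | h
    · exact key t t' h ω h1 h2
    · exact key t' t (by omega) ω h2 h1
  -- per-t claims
  have claim0 : ∀ t : ℕ,
      P (if g = lam0 - (t:ℝ) then Aset L X 0 t else ∅) = ENNReal.ofReal (f0 t) := by
    intro t
    by_cases hc : g = lam0 - (t:ℝ)
    · rw [if_pos hc]
      cases t with
      | zero =>
        have hempty : Aset L X 0 0 = ∅ := by
          ext ω
          simp only [Aset, Set.mem_setOf_eq, Set.mem_empty_iff_false, iff_false, not_and]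
          intro _
          rw [X_zero hX]
          omega
        rw [hempty, measure_empty]
        simp only [hf0def]
        rw [if_neg (by rintro ⟨h1, -⟩; omega)]
        simp
      | succ n =>
        by_cases hpar : (2:ℤ) ∣ (0 - s0 + ((n+1:ℕ):ℤ))
        · obtain ⟨r, hr⟩ := hpar
          rw [A_absorb0 hp0 hp1 hs0 hs0L hmeas hindep hplus hminus hX n,
            Q_eq_M hp0 hp1 hs0 hs0L hmeas hindep hplus hminus hX n 1 r ((n:ℤ) - r)
              (by push_cast at hr ⊢; omega) (by push_cast at hr ⊢; omega)]
          have hMcnn : (0:ℝ) ≤ (Mc L s0 n 1 : ℝ) := by exact_mod_cast Mc_nonneg L s0 n 1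
          rw [← ENNReal.ofReal_mul
            (mul_nonneg (mul_nonneg (zpow_pos hp0 r).le (zpow_pos hq0 _).le) hMcnn)]
          simp only [hf0def]
          rw [if_pos ⟨by omega, by push_cast at hc ⊢; linarith, ⟨r, hr⟩⟩]
          congr 1
          have hdiv : ((0:ℤ) - s0 + ((n+1:ℕ):ℤ)) / 2 = r := by
            push_cast at hr ⊢; omega
          rw [hdiv]
          simp only [Nat.add_sub_cancel]
          rw [htsum0 n r (by push_cast at hr ⊢; omega)]
          have hexp : ((n+1:ℕ):ℤ) - r = ((n:ℤ) - r) + 1 := by push_cast; ring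
          rw [hexp, zpow_add_one₀ (ne_of_gt hq0)]
          ring
        · rw [A_absorb0 hp0 hp1 hs0 hs0L hmeas hindep hplus hminus hX n,
            Q_parity hp0 hp1 hs0 hs0L hmeas hindep hplus hminus hX n 1
              (by push_cast at hpar ⊢; omega),
            zero_mul]
          simp only [hf0def]
          rw [if_neg (by rintro ⟨-, -, hd⟩; exact hpar hd)]
          simp
    · rw [if_neg hc, measure_empty]
      simp only [hf0def]
      rw [if_neg (by rintro ⟨-, h1, -⟩; exact hc (by linarith)), ENNReal.ofReal_zero]
  have claimL : ∀ t : ℕ,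
      P (if g = lamL - (t:ℝ) then Aset L X (L:ℤ) t else ∅) = ENNReal.ofReal (fL t) := by
    intro t
    by_cases hc : g = lamL - (t:ℝ)
    · rw [if_pos hc]
      cases t with
      | zero =>
        have hempty : Aset L X (L:ℤ) 0 = ∅ := by
          ext ω
          simp only [Aset, Set.mem_setOf_eq, Set.mem_empty_iff_false, iff_false, not_and]
          intro _
          rw [X_zero hX]
          omega
        rw [hempty, measure_empty]
        simp only [hfLdef]
        rw [if_neg (by rintro ⟨h1, -⟩; omega)]
        simp
      | succ n =>
        by_cases hpar : (2:ℤ) ∣ ((L:ℤ) - s0 + ((n+1:ℕ):ℤ))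
        · obtain ⟨r, hr⟩ := hpar
          rw [A_absorbL hp0 hp1 hs0 hs0L hmeas hindep hplus hminus hX n,
            Q_eq_M hp0 hp1 hs0 hs0L hmeas hindep hplus hminus hX n ((L:ℤ)-1) (r-1) ((n:ℤ) - r + 1)
              (by push_cast at hr ⊢; omega) (by push_cast at hr ⊢; omega)]
          have hMcnn : (0:ℝ) ≤ (Mc L s0 n ((L:ℤ)-1) : ℝ) := by
            exact_mod_cast Mc_nonneg L s0 n ((L:ℤ)-1)
          rw [← ENNReal.ofReal_mul
            (mul_nonneg (mul_nonneg (zpow_pos hp0 _).le (zpow_pos hq0 _).le) hMcnn)]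
          simp only [hfLdef]
          rw [if_pos ⟨by omega, by push_cast at hc ⊢; linarith, ⟨r, hr⟩⟩]
          congr 1
          have hdiv : (((L:ℤ)) - s0 + ((n+1:ℕ):ℤ)) / 2 = r := by
            push_cast at hr ⊢; omega
          rw [hdiv]
          simp only [Nat.add_sub_cancel]
          rw [htsumL n r (by push_cast at hr ⊢; omega)]
          have hexp1 : ((n+1:ℕ):ℤ) - r = ((n:ℤ) - r + 1) := by push_cast; ring
          have hexp2 : p ^ r = p ^ (r-1) * p := by
            rw [← zpow_add_one₀ (ne_of_gt hp0)]; congr 1; ring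
          rw [hexp1, hexp2]
          ring
        · rw [A_absorbL hp0 hp1 hs0 hs0L hmeas hindep hplus hminus hX n,
            Q_parity hp0 hp1 hs0 hs0L hmeas hindep hplus hminus hX n ((L:ℤ)-1)
              (by push_cast at hpar ⊢; omega),
            zero_mul]
          simp only [hfLdef]
          rw [if_neg (by rintro ⟨-, -, hd⟩; exact hpar hd)]
          simp
    · rw [if_neg hc, measure_empty]
      simp only [hfLdef]
      rw [if_neg (by rintro ⟨-, h1, -⟩; exact hc (by linarith)), ENNReal.ofReal_zero]
  have hPe : ∀ t, P (e t) = ENNReal.ofReal (f0 t) + ENNReal.ofReal (fL t) := by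
    intro t
    rw [hedef]
    rw [measure_union ?_ ?_]
    · rw [claim0 t, claimL t]
    · rw [Set.disjoint_left]
      intro ω h1 h2
      split_ifs at h1 h2 with hc1 hc2
      · have e1 := h1.2
        have e2 := h2.2
        change X t ω = 0 at e1
        change X t ω = (L:ℤ) at e2
        omega
      · exact h2
      · exact h1
      · exact h1
    · split_ifs
      · exact Aset_meas hmeas hX (L:ℤ) t
      · exact MeasurableSet.empty
  -- nonnegativity
  have hnn0 : ∀ t, 0 ≤ f0 t := by
    intro t
    simp only [hf0def]
    split_ifs with hcond
    · cases t with
      | zero => exact absurd hcond.1 (by omega)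
      | succ n =>
        obtain ⟨r, hr⟩ := hcond.2.2
        have hdiv : ((0:ℤ) - s0 + ((n+1:ℕ):ℤ)) / 2 = r := by push_cast at hr ⊢; omega
        rw [hdiv]
        simp only [Nat.add_sub_cancel]
        rw [htsum0 n r (by push_cast at hr ⊢; omega)]
        have hMcnn : (0:ℝ) ≤ (Mc L s0 n 1 : ℝ) := by exact_mod_cast Mc_nonneg L s0 n 1
        exact mul_nonneg (mul_nonneg (zpow_pos hq0 _).le (zpow_pos hp0 _).le) hMcnn
    · exact le_refl 0
  have hnnL : ∀ t, 0 ≤ fL t := by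
    intro t
    simp only [hfLdef]
    split_ifs with hcond
    · cases t with
      | zero => exact absurd hcond.1 (by omega)
      | succ n =>
        obtain ⟨r, hr⟩ := hcond.2.2
        have hdiv : (((L:ℤ)) - s0 + ((n+1:ℕ):ℤ)) / 2 = r := by push_cast at hr ⊢; omega
        rw [hdiv]
        simp only [Nat.add_sub_cancel]
        rw [htsumL n r (by push_cast at hr ⊢; omega)]
        have hMcnn : (0:ℝ) ≤ (Mc L s0 n ((L:ℤ)-1) : ℝ) := by
          exact_mod_cast Mc_nonneg L s0 n ((L:ℤ)-1)
        exact mul_nonneg (mul_nonneg (zpow_pos hq0 _).le (zpow_pos hp0 _).le) hMcnn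
    · exact le_refl 0
  -- summability
  have hkey : (∑' t, ENNReal.ofReal (f0 t)) + (∑' t, ENNReal.ofReal (fL t))
      = P (⋃ t, e t) := by
    rw [measure_iUnion hdisj hmeas_e, tsum_congr hPe, ENNReal.tsum_add]
  have hle1 : (∑' t, ENNReal.ofReal (f0 t)) + (∑' t, ENNReal.ofReal (fL t)) ≤ 1 := by
    rw [hkey]; exact prob_le_one
  have hne0 : (∑' t, ENNReal.ofReal (f0 t)) ≠ ⊤ :=
    ne_top_of_le_ne_top ENNReal.one_ne_top (le_trans le_self_add hle1)
  have hneL : (∑' t, ENNReal.ofReal (fL t)) ≠ ⊤ :=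
    ne_top_of_le_ne_top ENNReal.one_ne_top (le_trans le_add_self hle1)
  have hsummable0 : Summable f0 := by
    refine (ENNReal.summable_toReal hne0).congr fun t => ?_
    rw [ENNReal.toReal_ofReal (hnn0 t)]
  have hsummableL : Summable fL := by
    refine (ENNReal.summable_toReal hneL).congr fun t => ?_
    rw [ENNReal.toReal_ofReal (hnnL t)]
  -- final assembly
  rw [hEeq, measure_iUnion hdisj hmeas_e, tsum_congr hPe, ENNReal.tsum_add, hRHS,
    ENNReal.ofReal_add (tsum_nonneg hnn0) (tsum_nonneg hnnL),
    ENNReal.ofReal_tsum_of_nonneg hnn0 hsummable0,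
    ENNReal.ofReal_tsum_of_nonneg hnnL hsummableL]
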